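/- Let O_S, O_T : ℕ → ℤ (for n ≥ 1) with corresponding fixed-point counts F_S(n) = Σ_{d|n} d·O_S(d), F_T(n) = Σ_{d|n} d·O_T(d). If O_S and O_T are both multiplicative (f(mn) = f(m)f(n) whenever gcd(m,n)=1 and f(1)=1), then the product orbit count O_{S×T}(n) = Σ_{lcm(d₁,d₂)=n} O_S(d₁)·O_T(d₂)·gcd(d₁,d₂) is also multiplicative. -/

import Mathlib

/-- `f` is multiplicative: `f 1 = 1` and `f (m*n) = f m * f n` for coprime `m, n`. -/
def IsMultFn (f : ℕ → ℤ) : Prop :=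
  f 1 = 1 ∧ ∀ m n : ℕ, Nat.Coprime m n → f (m * n) = f m * f n

open ArithmeticFunction Finset
open scoped ArithmeticFunction.zeta ArithmeticFunction.Moebius

theorem product_orbit_count_multiplicative (OS OT FS FT : ℕ → ℤ)
    (hFS : ∀ n : ℕ, 1 ≤ n → FS n = ∑ d ∈ n.divisors, (d : ℤ) * OS d)
    (hFT : ∀ n : ℕ, 1 ≤ n → FT n = ∑ d ∈ n.divisors, (d : ℤ) * OT d)
    (hOS : IsMultFn OS) (hOT : IsMultFn OT) :
    IsMultFn (fun n => ∑ d₁ ∈ n.divisors, ∑ d₂ ∈ n.divisors,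
      if Nat.lcm d₁ d₂ = n then OS d₁ * OT d₂ * (Nat.gcd d₁ d₂ : ℤ) else 0) := by
  set O : ℕ → ℤ := fun n => ∑ d₁ ∈ n.divisors, ∑ d₂ ∈ n.divisors,
      if Nat.lcm d₁ d₂ = n then OS d₁ * OT d₂ * (Nat.gcd d₁ d₂ : ℤ) else 0 with hO
  -- key summation identity : ∑_{d|n} d * O d = (∑_{d|n} d*OS d) * (∑_{d|n} d*OT d)
  have key : ∀ n : ℕ, 0 < n → ∑ d ∈ n.divisors, (d : ℤ) * O d
      = (∑ d ∈ n.divisors, (d : ℤ) * OS d) * (∑ d ∈ n.divisors, (d : ℤ) * OT d) := by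
    intro n hn
    have hext : ∀ d ∈ n.divisors,
        (d : ℤ) * O d = ∑ d₁ ∈ n.divisors, ∑ d₂ ∈ n.divisors,
          (if Nat.lcm d₁ d₂ = d then (d : ℤ) * (OS d₁ * OT d₂ * (Nat.gcd d₁ d₂ : ℤ)) else 0) := by
      intro d hd
      have hdne : d ≠ 0 := (Nat.pos_of_mem_divisors hd).ne'
      have hsub : d.divisors ⊆ n.divisors :=
        Nat.divisors_subset_of_dvd hn.ne' (Nat.dvd_of_mem_divisors hd)
      rw [hO]
      simp only
      rw [Finset.mul_sum]
      have inner : ∀ d₁, (d : ℤ) * ∑ d₂ ∈ d.divisors,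
          (if Nat.lcm d₁ d₂ = d then OS d₁ * OT d₂ * (Nat.gcd d₁ d₂ : ℤ) else 0)
          = ∑ d₂ ∈ n.divisors,
          (if Nat.lcm d₁ d₂ = d then (d : ℤ) * (OS d₁ * OT d₂ * (Nat.gcd d₁ d₂ : ℤ)) else 0) := by
        intro d₁
        rw [Finset.mul_sum]
        rw [Finset.sum_subset hsub]
        · exact Finset.sum_congr rfl fun d₂ _ => by
            split <;> simp
        · intro d₂ _ hd₂
          rw [if_neg, mul_zero]
          intro hl
          exact hd₂ (Nat.mem_divisors.mpr ⟨hl ▸ Nat.dvd_lcm_right d₁ d₂, hdne⟩)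
      rw [Finset.sum_congr rfl fun d₁ _ => inner d₁]
      rw [Finset.sum_subset hsub]
      intro d₁ _ hd₁
      apply Finset.sum_eq_zero
      intro d₂ _
      rw [if_neg]
      intro hl
      exact hd₁ (Nat.mem_divisors.mpr ⟨hl ▸ Nat.dvd_lcm_left d₁ d₂, hdne⟩)
    rw [Finset.sum_congr rfl hext, Finset.sum_comm]
    rw [Finset.sum_congr rfl (fun d₁ _ => Finset.sum_comm)]
    rw [Finset.sum_mul_sum]
    refine Finset.sum_congr rfl fun d₁ hd₁ => Finset.sum_congr rfl fun d₂ hd₂ => ?_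
    have hmem : Nat.lcm d₁ d₂ ∈ n.divisors := Nat.mem_divisors.mpr
      ⟨Nat.lcm_dvd (Nat.dvd_of_mem_divisors hd₁) (Nat.dvd_of_mem_divisors hd₂), hn.ne'⟩
    rw [Finset.sum_ite_eq n.divisors (Nat.lcm d₁ d₂)
      (fun d => (d : ℤ) * (OS d₁ * OT d₂ * (Nat.gcd d₁ d₂ : ℤ))), if_pos hmem]
    have hlg : (Nat.lcm d₁ d₂ : ℤ) * (Nat.gcd d₁ d₂ : ℤ) = (d₁ : ℤ) * d₂ := by
      rw [← Nat.cast_mul, ← Nat.cast_mul, mul_comm (Nat.lcm d₁ d₂), Nat.gcd_mul_lcm]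
    linear_combination (OS d₁ * OT d₂) * hlg
  -- arithmetic functions
  let fS : ArithmeticFunction ℤ := ⟨fun n => (n : ℤ) * OS n, by simp⟩
  let fT : ArithmeticFunction ℤ := ⟨fun n => (n : ℤ) * OT n, by simp⟩
  have hfS : fS.IsMultiplicative := by
    refine ⟨by simp [fS, hOS.1], fun {m n} h => ?_⟩
    show ((m * n : ℕ) : ℤ) * OS (m * n) = ((m : ℤ) * OS m) * ((n : ℤ) * OS n)
    rw [hOS.2 m n h]
    push_cast
    ring
  have hfT : fT.IsMultiplicative := by
    refine ⟨by simp [fT, hOT.1], fun {m n} h => ?_⟩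
    show ((m * n : ℕ) : ℤ) * OT (m * n) = ((m : ℤ) * OT m) * ((n : ℤ) * OT n)
    rw [hOT.2 m n h]
    push_cast
    ring
  let G : ArithmeticFunction ℤ := ((ζ : ArithmeticFunction ℤ) * fS).pmul
    ((ζ : ArithmeticFunction ℤ) * fT)
  have hG : G.IsMultiplicative :=
    (isMultiplicative_zeta.natCast.mul hfS).pmul (isMultiplicative_zeta.natCast.mul hfT)
  have hGval : ∀ n : ℕ, 0 < n →
      G n = (∑ d ∈ n.divisors, (d : ℤ) * OS d) * (∑ d ∈ n.divisors, (d : ℤ) * OT d) := by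
    intro n hn
    show (((ζ : ArithmeticFunction ℤ) * fS) n) * (((ζ : ArithmeticFunction ℤ) * fT) n) = _
    rw [coe_zeta_mul_apply, coe_zeta_mul_apply]
    rfl
  -- Möbius inversion
  have hinv : ∀ n : ℕ, n > 0 → ∑ x ∈ n.divisorsAntidiagonal, μ x.fst • G x.snd = (n : ℤ) * O n := by
    rw [← sum_eq_iff_sum_smul_moebius_eq]
    intro n hn
    rw [key n hn, hGval n hn]
  let gO : ArithmeticFunction ℤ := ⟨fun n => (n : ℤ) * O n, by simp⟩
  have hgOeq : gO = (μ : ArithmeticFunction ℤ) * G := by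
    ext n
    rcases Nat.eq_zero_or_pos n with rfl | hn
    · simp
    · show (n : ℤ) * O n = ((μ : ArithmeticFunction ℤ) * G) n
      rw [mul_apply, ← hinv n hn]
      refine Finset.sum_congr rfl fun x _ => ?_
      rw [zsmul_eq_mul]
      rfl
  have hgO : gO.IsMultiplicative := hgOeq ▸ isMultiplicative_moebius.intCast.mul hG
  constructor
  · show O 1 = 1
    rw [hO]
    simp [Nat.divisors_one, hOS.1, hOT.1]
  · intro m n h
    rcases Nat.eq_zero_or_pos m with rfl | hm
    · have hn1 : n = 1 := Nat.coprime_zero_left n |>.mp h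
      subst hn1
      show O 0 = O 0 * O 1
      rw [hO]; simp
    rcases Nat.eq_zero_or_pos n with rfl | hn
    · have hm1 : m = 1 := Nat.coprime_zero_right m |>.mp h
      subst hm1
      show O 0 = O 1 * O 0
      rw [hO]; simp
    have := hgO.2 h
    have hmn : ((m * n : ℕ) : ℤ) * O (m * n) = ((m : ℤ) * O m) * ((n : ℤ) * O n) := this
    have hne : ((m * n : ℕ) : ℤ) ≠ 0 := by positivity
    show O (m * n) = O m * O n
    have : ((m * n : ℕ) : ℤ) * O (m * n) = ((m * n : ℕ) : ℤ) * (O m * O n) := by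
      rw [hmn]; push_cast; ring
    exact mul_left_cancel₀ hne this
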